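/- Let s ≥ 1, let n₁,…,n_s be integers with each n_j ≥ 1, and let i₁,…,i_s ∈ {1,2,3}. Then the integer triple rot_{i_s}^{n_s} ⋯ rot_{i_1}^{n_1}(1,1,1) satisfies size(rot_{i_s}^{n_s} ⋯ rot_{i_1}^{n_1}(1,1,1)) ≤ (3ε)^{2^{s−1}(n₁+1)(n₂+1)⋯(n_s+1)}, where ε = (3+√5)/2. -/

import Mathlib

namespace Markoff

variable {R : Type*} [CommRing R]

/-- The three rotations acting on triples. -/
def rot (i : Fin 3) : R × R × R → R × R × R :=
  ![fun x => (x.1, x.2.2, 3 * x.1 * x.2.2 - x.2.1),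
    fun x => (x.2.2, x.2.1, 3 * x.2.1 * x.2.2 - x.1),
    fun x => (x.2.1, 3 * x.2.1 * x.2.2 - x.1, x.2.2)] i

/-- The `i`-th coordinate of a triple. -/
def coord (i : Fin 3) (x : R × R × R) : R := ![x.1, x.2.1, x.2.2] i

/-- The Markoff equation. -/
def IsMarkoff (x : R × R × R) : Prop :=
  x.1 ^ 2 + x.2.1 ^ 2 + x.2.2 ^ 2 = 3 * x.1 * x.2.1 * x.2.2

/-- The nonzero Markoff points mod `p`. -/
def Xstar (p : ℕ) : Set (ZMod p × ZMod p × ZMod p) :=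
  {x | IsMarkoff x ∧ x ≠ (0, 0, 0)}

/-- The rotations as permutations. -/
def rotPerm (i : Fin 3) : Equiv.Perm (R × R × R) where
  toFun := rot i
  invFun := ![fun y => (y.1, 3 * y.1 * y.2.1 - y.2.2, y.2.1),
              fun y => (3 * y.1 * y.2.1 - y.2.2, y.2.1, y.1),
              fun y => (3 * y.1 * y.2.2 - y.2.1, y.1, y.2.2)] i
  left_inv := by
    fin_cases i <;> rintro ⟨a, b, c⟩ <;>
      simp [rot, Matrix.cons_val_zero, Matrix.cons_val_one] <;> ring
  right_inv := by
    fin_cases i <;> rintro ⟨a, b, c⟩ <;>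
      simp [rot, Matrix.cons_val_zero, Matrix.cons_val_one] <;> ring

/-- The `i`-th rotation order: the least `n > 0` with `rot i ^[n] x = x`. -/
noncomputable def ordi (p : ℕ) (i : Fin 3) (x : ZMod p × ZMod p × ZMod p) : ℕ :=
  sInf {n | 0 < n ∧ (rot i)^[n] x = x}

/-- The rotation order: max of the three rotation orders. -/
noncomputable def ordp (p : ℕ) (x : ZMod p × ZMod p × ZMod p) : ℕ :=
  max (ordi p 0 x) (max (ordi p 1 x) (ordi p 2 x))

/-- The size of an integer triple. -/
def size (x : ℤ × ℤ × ℤ) : ℤ := max x.1 (max x.2.1 x.2.2)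

/-- `t` is a lift of `x` mod `p`. -/
def IsLift (p : ℕ) (t : ℤ × ℤ × ℤ) (x : ZMod p × ZMod p × ZMod p) : Prop :=
  IsMarkoff t ∧ ((t.1 : ZMod p), (t.2.1 : ZMod p), (t.2.2 : ZMod p)) = x

noncomputable def eps : ℝ := (3 + Real.sqrt 5) / 2

/-- Apply a word of rotations: `rotWord [(i₁,n₁),…,(i_s,n_s)] x = rot_{i_s}^{n_s} ⋯ rot_{i_1}^{n_1} x`. -/
def rotWord (w : List (Fin 3 × ℕ)) (x : R × R × R) : R × R × R :=
  w.foldl (fun y q => (rot q.1)^[q.2] y) x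

/-- `x` is a maximal triple. -/
def IsMax (p : ℕ) (x : ZMod p × ZMod p × ZMod p) : Prop :=
  ∃ i : Fin 3, ordi p i x = p - 1 ∨ ordi p i x = p + 1 ∨ ordi p i x = 2 * p

/-- The cage: maximal triples in `X*(p)`. -/
def Cage (p : ℕ) : Set (ZMod p × ZMod p × ZMod p) :=
  {x ∈ Xstar p | IsMax p x}

/-- The conic section `C_i(a)`. -/
def Ci (p : ℕ) (i : Fin 3) (a : ZMod p) : Set (ZMod p × ZMod p × ZMod p) :=
  {x ∈ Xstar p | coord i x = a}


/-- The pair map underlying each rotation with fixed coordinate `a`. -/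
def fA (a : ℤ) : ℤ × ℤ → ℤ × ℤ := fun p => (p.2, 3 * a * p.2 - p.1)

/-- Positivity of an integer triple. -/
def Pos (x : ℤ × ℤ × ℤ) : Prop := 1 ≤ x.1 ∧ 1 ≤ x.2.1 ∧ 1 ≤ x.2.2

/-- Bound on an integer triple. -/
def Bnd (B : ℤ) (x : ℤ × ℤ × ℤ) : Prop := 3 * x.1 ≤ B ∧ 3 * x.2.1 ≤ B ∧ 3 * x.2.2 ≤ B

lemma core (a B : ℤ) (ha : 1 ≤ a) (haB : 3 * a ≤ B) (n : ℕ) (u v : ℤ)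
    (hu : 1 ≤ u) (hv : 1 ≤ v) (hub : 3 * u ≤ B) (hvb : 3 * v ≤ B)
    (hm : a ^ 2 + u ^ 2 + v ^ 2 = 3 * a * u * v) :
    1 ≤ ((fA a)^[n] (u, v)).1 ∧ 1 ≤ ((fA a)^[n] (u, v)).2 ∧
      3 * ((fA a)^[n] (u, v)).1 ≤ B ^ (n + 1) ∧ 3 * ((fA a)^[n] (u, v)).2 ≤ B ^ (n + 1) ∧
      a ^ 2 + ((fA a)^[n] (u, v)).1 ^ 2 + ((fA a)^[n] (u, v)).2 ^ 2 =
        3 * a * ((fA a)^[n] (u, v)).1 * ((fA a)^[n] (u, v)).2 := by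
  have hB : (3 : ℤ) ≤ B := by nlinarith
  induction n with
  | zero => simpa using ⟨hu, hv, hub, hvb, hm⟩
  | succ n ih =>
    obtain ⟨h1, h2, h3, h4, h5⟩ := ih
    set p := (fA a)^[n] (u, v) with hp
    rw [Function.iterate_succ_apply']
    have hfa : (fA a) p = (p.2, 3 * a * p.2 - p.1) := rfl
    rw [hfa]
    have hpow : B ^ (n + 1) ≤ B ^ (n + 2) :=
      pow_le_pow_right₀ (by linarith) (by omega)
    have hnew1 : 1 ≤ 3 * a * p.2 - p.1 := by nlinarith
    refine ⟨h2, hnew1, by simpa using le_trans h4 hpow, ?_, by linear_combination h5⟩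
    have hmul : (3 * a) * (3 * p.2) ≤ B * B ^ (n + 1) :=
      mul_le_mul haB h4 (by linarith) (by linarith)
    have : B * B ^ (n + 1) = B ^ (n + 2) := by ring
    simp only [Prod.fst, Prod.snd]
    nlinarith

lemma rot0_iter (n : ℕ) (a : ℤ) (p : ℤ × ℤ) :
    (rot 0)^[n] ((a, p) : ℤ × ℤ × ℤ) = (a, (fA a)^[n] p) := by
  induction n with
  | zero => rfl
  | succ n ih => rw [Function.iterate_succ_apply', Function.iterate_succ_apply', ih]; rfl

lemma rot1_iter (n : ℕ) (a b c : ℤ) :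
    (rot 1)^[n] ((a, b, c) : ℤ × ℤ × ℤ) =
      (((fA b)^[n] (a, c)).1, b, ((fA b)^[n] (a, c)).2) := by
  induction n with
  | zero => rfl
  | succ n ih => rw [Function.iterate_succ_apply', Function.iterate_succ_apply', ih]; rfl

lemma rot2_iter (n : ℕ) (a b c : ℤ) :
    (rot 2)^[n] ((a, b, c) : ℤ × ℤ × ℤ) =
      (((fA c)^[n] (a, b)).1, ((fA c)^[n] (a, b)).2, c) := by
  induction n with
  | zero => rfl
  | succ n ih =>
    rw [Function.iterate_succ_apply', Function.iterate_succ_apply', ih]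
    simp only [rot, fA, Matrix.cons_val_two, Matrix.tail_cons, Matrix.head_cons, Prod.mk.injEq]
    exact ⟨trivial, by ring, trivial⟩

lemma rot_iter (i : Fin 3) (n : ℕ) (x : ℤ × ℤ × ℤ) (B : ℤ)
    (hm : IsMarkoff x) (hp : Pos x) (hb : Bnd B x) :
    IsMarkoff ((rot i)^[n] x) ∧ Pos ((rot i)^[n] x) ∧ Bnd (B ^ (n + 1)) ((rot i)^[n] x) := by
  obtain ⟨a, b, c⟩ := x
  obtain ⟨ha, hbb, hc⟩ := hp
  obtain ⟨hba, hbc, hbd⟩ := hb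
  simp only [IsMarkoff] at hm
  fin_cases i <;> simp only [Fin.zero_eta, Fin.mk_one, Fin.isValue, Fin.reduceFinMk]
  · have h := core a B ha hba n b c hbb hc hbc hbd (by linear_combination hm)
    rw [show ((a, b, c) : ℤ × ℤ × ℤ) = (a, (b, c)) from rfl, rot0_iter]
    obtain ⟨h1, h2, h3, h4, h5⟩ := h
    have hBp : B ^ (n + 1) ≥ 3 * a := by
      calc 3 * a ≤ B := hba
      _ ≤ B ^ (n + 1) := le_self_pow₀ (by linarith) (by omega)
    exact ⟨by simpa [IsMarkoff] using (by linear_combination h5 : _), ⟨ha, h1, h2⟩,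
      ⟨hBp, h3, h4⟩⟩
  · have h := core b B hbb hbc n a c ha hc hba hbd (by linear_combination hm)
    rw [rot1_iter]
    obtain ⟨h1, h2, h3, h4, h5⟩ := h
    have hBp : B ^ (n + 1) ≥ 3 * b := by
      calc 3 * b ≤ B := hbc
      _ ≤ B ^ (n + 1) := le_self_pow₀ (by linarith) (by omega)
    exact ⟨by simpa [IsMarkoff] using (by linear_combination h5 : _), ⟨h1, hbb, h2⟩,
      ⟨h3, hBp, h4⟩⟩
  · have h := core c B hc hbd n a b ha hbb hba hbc (by linear_combination hm)
    rw [rot2_iter]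
    obtain ⟨h1, h2, h3, h4, h5⟩ := h
    have hBp : B ^ (n + 1) ≥ 3 * c := by
      calc 3 * c ≤ B := hbd
      _ ≤ B ^ (n + 1) := le_self_pow₀ (by linarith) (by omega)
    exact ⟨by simpa [IsMarkoff] using (by linear_combination h5 : _), ⟨h1, h2, hc⟩,
      ⟨h3, h4, hBp⟩⟩

lemma word_bound (w : List (Fin 3 × ℕ)) :
    ∀ (x : ℤ × ℤ × ℤ) (B : ℤ), IsMarkoff x → Pos x → 3 ≤ B → Bnd B x →
      IsMarkoff (rotWord w x) ∧ Pos (rotWord w x) ∧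
        Bnd (B ^ ((w.map (fun q => q.2 + 1)).prod)) (rotWord w x) := by
  induction w with
  | nil => intro x B hm hp hB hb; simpa [rotWord] using ⟨hm, hp, hb⟩
  | cons q w ih =>
    intro x B hm hp hB hb
    have h := rot_iter q.1 q.2 x B hm hp hb
    have hstep : rotWord (q :: w) x = rotWord w ((rot q.1)^[q.2] x) := rfl
    rw [hstep]
    have hB' : (3 : ℤ) ≤ B ^ (q.2 + 1) := le_trans hB (le_self_pow₀ (by linarith) (by omega))
    have := ih ((rot q.1)^[q.2] x) (B ^ (q.2 + 1)) h.1 h.2.1 hB' h.2.2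
    rw [← pow_mul] at this
    simpa [mul_comm] using this

theorem stmt_3 (w : List (Fin 3 × ℕ)) (hw : w ≠ []) (hpos : ∀ q ∈ w, 1 ≤ q.2) :
    (size (rotWord w ((1, 1, 1) : ℤ × ℤ × ℤ)) : ℝ) ≤
      (3 * eps) ^ (2 ^ (w.length - 1) * (w.map (fun q => q.2 + 1)).prod) := by
  set P := (w.map (fun q => q.2 + 1)).prod with hP
  have h := word_bound w (1, 1, 1) 3 (by norm_num [IsMarkoff])
    (by norm_num [Pos]) le_rfl (by norm_num [Bnd])
  set y := rotWord w ((1, 1, 1) : ℤ × ℤ × ℤ)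
  obtain ⟨_, hp, hb⟩ := h
  have hsz : size y ≤ 3 ^ P := by
    have h1 : size y ≤ 3 * size y := by
      have : 1 ≤ size y := le_trans hp.1 (le_max_left _ _)
      linarith
    have h2 : 3 * size y ≤ 3 ^ P := by
      simp only [size, mul_max_of_nonneg _ _ (by norm_num : (0:ℤ) ≤ 3)]
      exact max_le hb.1 (max_le hb.2.1 hb.2.2)
    linarith
  have hcast : (size y : ℝ) ≤ (3 : ℝ) ^ P := by
    calc (size y : ℝ) ≤ ((3 ^ P : ℤ) : ℝ) := by exact_mod_cast hsz
    _ = (3 : ℝ) ^ P := by push_cast; ring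
  have heps : (1 : ℝ) ≤ eps := by
    have : (0 : ℝ) ≤ Real.sqrt 5 := Real.sqrt_nonneg 5
    unfold eps; linarith
  have h3e : (3 : ℝ) ≤ 3 * eps := by linarith
  have hPN : P ≤ 2 ^ (w.length - 1) * P :=
    Nat.le_mul_of_pos_left P (Nat.pow_pos (by norm_num))
  calc (size y : ℝ) ≤ (3 : ℝ) ^ P := hcast
    _ ≤ (3 * eps) ^ P := pow_le_pow_left₀ (by norm_num) h3e P
    _ ≤ (3 * eps) ^ (2 ^ (w.length - 1) * P) := pow_le_pow_right₀ (by linarith) hPN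

end Markoff
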